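/- arXiv:2011.13412 — 4 statements merged into one kernel-verified Lean document; each statement's English description precedes it below -/
import Mathlib

section
/- Let N > 2, γ > 0, and let B = B(0,1) ⊂ ℝ^N be the open unit ball. Define u(x) = |x|^{−γ} − |x|^2, b(x) = γ x/|x|^2 for x ≠ 0. Then: (i) ∇u(x) + b(x)u(x) = −(2+γ)x for every x ∈ B ∖ {0}; (ii) u = 0 on ∂B and u is unbounded on B (it tends to +∞ as x → 0); (iii) the weak-L^N norm of |b| on B satisfies ‖|b|‖_{L^{N,∞}(B)} = γ ω_N^{1/N}, where ω_N is the Lebesgue measure of the unit ball of ℝ^N. In particular, the weak-L^N norm of the coefficient b can be made arbitrarily small by taking γ small, while the corresponding solution u stays unbounded. -/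
open MeasureTheory Real Set Filter Topology
open scoped ENNReal NNReal BigOperators

noncomputable section

abbrev Rn (N : ℕ) := EuclideanSpace ℝ (Fin N)

/-- The distribution function `μ_v(t) = |{x ∈ Ω : |v x| > t}|`. -/
noncomputable def distrib {N : ℕ} (Ω : Set (Rn N)) (v : Rn N → ℝ) (t : ℝ) : ℝ≥0∞ :=
  volume {x ∈ Ω | t < |v x|}

/-- The decreasing rearrangement `v*(s) = sup {t ≥ 0 : μ_v(t) ≥ s}`. -/
noncomputable def decRearr {N : ℕ} (Ω : Set (Rn N)) (v : Rn N → ℝ) (s : ℝ) : ℝ≥0∞ :=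
  sSup (ENNReal.ofReal '' {t : ℝ | 0 ≤ t ∧ ENNReal.ofReal s ≤ distrib Ω v t})

/-- The Marcinkiewicz (weak `L^p`, i.e. `L^{p,∞}`) quasinorm. -/
noncomputable def weakNorm {N : ℕ} (Ω : Set (Rn N)) (v : Rn N → ℝ) (p : ℝ) : ℝ≥0∞ :=
  ⨆ (t : ℝ) (_ : 0 < t ∧ ENNReal.ofReal t < volume Ω),
    ENNReal.ofReal t ^ (1 / p) * decRearr Ω v t

/-- **Example 2.3**: an unbounded solution of a Dirichlet problem whose lower order
coefficient has arbitrarily small weak-`L^N` norm. -/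
theorem unbounded_solution_small_weak_norm
    {N : ℕ} (hN : 2 < N) (γ : ℝ) (hγ : 0 < γ)
    (u : Rn N → ℝ) (hu : ∀ x : Rn N, u x = ‖x‖ ^ (-γ) - ‖x‖ ^ (2 : ℝ))
    (b : Rn N → Rn N) (hb : ∀ x : Rn N, x ≠ 0 → b x = (γ / ‖x‖ ^ (2 : ℝ)) • x) :
    -- (i) `∇u(x) + b(x) u(x) = -(2+γ) x` on `B(0,1) \ {0}`
    (∀ x : Rn N, x ∈ Metric.ball (0 : Rn N) 1 → x ≠ 0 →
      ∃ gu : Rn N, HasGradientAt u gu x ∧ gu + u x • b x = (-(2 + γ)) • x) ∧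
    -- (ii) `u = 0` on the boundary, `u → +∞` at the origin, `u` unbounded on the ball
    (∀ x : Rn N, ‖x‖ = 1 → u x = 0) ∧
    Tendsto u (𝓝[≠] (0 : Rn N)) atTop ∧
    ¬ BddAbove (u '' Metric.ball (0 : Rn N) 1) ∧
    -- (iii) `‖ |b| ‖_{L^{N,∞}(B)} = γ ω_N^{1/N}`
    weakNorm (Metric.ball (0 : Rn N) 1) (fun x => ‖b x‖) (N : ℝ) =
      ENNReal.ofReal
        (γ * (volume (Metric.ball (0 : Rn N) 1)).toReal ^ (1 / (N : ℝ))) := by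
  have hN0 : N ≠ 0 := by omega
  have hNR : (0:ℝ) < N := by exact_mod_cast Nat.pos_of_ne_zero hN0
  haveI : Nonempty (Fin N) := ⟨⟨0, Nat.pos_of_ne_zero hN0⟩⟩
  haveI : Nontrivial (Rn N) := inferInstance
  -- Part (i)
  have part1 : ∀ x : Rn N, x ∈ Metric.ball (0 : Rn N) 1 → x ≠ 0 →
      ∃ gu : Rn N, HasGradientAt u gu x ∧ gu + u x • b x = (-(2 + γ)) • x := by
    intro x _ hx
    have hr : (0:ℝ) < ‖x‖ := norm_pos_iff.2 hx
    have hgx : (‖x‖^2 : ℝ) ≠ 0 := by positivity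
    set c : ℝ := -(γ/2) * (‖x‖^2)^(-(γ/2)-1) - 1 with hc
    refine ⟨(2 * c) • x, ?_, ?_⟩
    · have hφ : HasDerivAt (fun t : ℝ => t ^ (-(γ/2)) - t) c (‖x‖^2) := by
        have h := (Real.hasDerivAt_rpow_const (p := -(γ/2)) (Or.inl hgx)).sub (hasDerivAt_id' (‖x‖^2))
        exact h
      have hg : HasFDerivAt (fun y : Rn N => ‖y‖^2) (2 • (innerSL ℝ x)) x :=
        (hasStrictFDerivAt_norm_sq x).hasFDerivAt
      have hcomp : HasFDerivAt (fun y : Rn N => (‖y‖^2:ℝ) ^ (-(γ/2)) - ‖y‖^2)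
          (c • (2 • (innerSL ℝ x))) x := by have := hφ.comp_hasFDerivAt x hg; exact this
      have hue : u = fun y : Rn N => (‖y‖^2:ℝ) ^ (-(γ/2)) - ‖y‖^2 := by
        funext y
        rw [hu y]
        rcases eq_or_ne y 0 with rfl | hy
        · rw [norm_zero, Real.zero_rpow (neg_ne_zero.2 hγ.ne'),
            Real.zero_rpow (by norm_num : (2:ℝ) ≠ 0)]
          norm_num
          exact (Real.zero_rpow (by intro h; nlinarith : -(γ/2) ≠ 0)).symm
        · have hry : (0:ℝ) < ‖y‖ := norm_pos_iff.2 hy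
          rw [← Real.rpow_natCast ‖y‖ 2, ← Real.rpow_mul hry.le]
          push_cast
          ring_nf
      rw [hasGradientAt_iff_hasFDerivAt, hue]
      refine hcomp.congr_fderiv ?_
      ext y
      simp [real_inner_smul_left, smul_smul]
      ring
    · rw [hu x, hb x hx, smul_smul, ← add_smul]
      congr 1
      have h2 : ‖x‖ ^ (2:ℝ) = ‖x‖^2 := by
        rw [show (2:ℝ) = ((2:ℕ):ℝ) by norm_num, Real.rpow_natCast]
      have e1 : ((‖x‖^2:ℝ)) ^ (-(γ/2)-1) = ‖x‖ ^ (-γ-2) := by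
        rw [← Real.rpow_natCast ‖x‖ 2, ← Real.rpow_mul hr.le]
        norm_num
        ring_nf
      have e2 : ‖x‖^(-γ) = ‖x‖^(-γ-2) * ‖x‖^(2:ℝ) := by
        rw [← Real.rpow_add hr]; ring_nf
      rw [hc, e1, e2, h2]
      have h2' : (‖x‖^2 : ℝ) ≠ 0 := hgx
      field_simp
      ring
  -- Part (ii) : boundary value
  have part2 : ∀ x : Rn N, ‖x‖ = 1 → u x = 0 := by
    intro x hx
    rw [hu x, hx, Real.one_rpow, Real.one_rpow, sub_self]
  -- Part (ii) : tendsto atTop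
  have part3 : Tendsto u (𝓝[≠] (0 : Rn N)) atTop := by
    have hnorm : Tendsto (fun x : Rn N => ‖x‖) (𝓝[≠] (0:Rn N)) (𝓝[>] (0:ℝ)) := by
      rw [tendsto_nhdsWithin_iff]
      constructor
      · exact (continuous_norm.tendsto' 0 0 norm_zero).mono_left nhdsWithin_le_nhds
      · exact eventually_mem_nhdsWithin.mono fun x hx => norm_pos_iff.2 hx
    have h1 : Tendsto (fun t : ℝ => t ^ (-γ)) (𝓝[>] (0:ℝ)) atTop := by
      have h := (tendsto_rpow_atTop hγ).comp tendsto_inv_nhdsGT_zero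
      refine h.congr' ?_
      filter_upwards [self_mem_nhdsWithin] with t ht
      have ht : (0:ℝ) < t := ht
      simp only [Function.comp]
      rw [← Real.rpow_neg_one t, ← Real.rpow_mul ht.le]
      norm_num
    have h2 : Tendsto (fun x : Rn N => ‖x‖ ^ (-γ) + (-1)) (𝓝[≠] (0:Rn N)) atTop :=
      tendsto_atTop_add_const_right _ _ (h1.comp hnorm)
    refine tendsto_atTop_mono' _ ?_ h2
    have hball : ∀ᶠ x : Rn N in 𝓝[≠] (0:Rn N), ‖x‖ ≤ 1 := by
      refine eventually_nhdsWithin_of_eventually_nhds ?_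
      filter_upwards [Metric.closedBall_mem_nhds (0:Rn N) one_pos] with x hx
      exact mem_closedBall_zero_iff.1 hx
    filter_upwards [hball] with x hx
    rw [hu x]
    have : ‖x‖ ^ (2:ℝ) ≤ 1 := Real.rpow_le_one (norm_nonneg x) hx (by norm_num)
    linarith
  -- Part (ii) : unbounded
  have part4 : ¬ BddAbove (u '' Metric.ball (0 : Rn N) 1) := by
    rintro ⟨M, hM⟩
    haveI := Module.punctured_nhds_neBot ℝ (Rn N) (0 : Rn N)
    have hev1 : ∀ᶠ x : Rn N in 𝓝[≠] (0:Rn N), M < u x := part3.eventually_gt_atTop M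
    have hev2 : ∀ᶠ x : Rn N in 𝓝[≠] (0:Rn N), x ∈ Metric.ball (0:Rn N) 1 :=
      eventually_of_mem (mem_nhdsWithin_of_mem_nhds (Metric.ball_mem_nhds 0 one_pos)) fun x hx => hx
    obtain ⟨x, hx1, hx2⟩ := (hev1.and hev2).exists
    exact absurd (hM ⟨x, hx2, rfl⟩) (not_le.2 hx1)
  refine ⟨part1, part2, part3, part4, ?_⟩
  -- Part (iii)
  set B := Metric.ball (0 : Rn N) 1 with hB
  set v : Rn N → ℝ := fun x => ‖b x‖ with hv
  set ωE := volume B with hωE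
  set ωR := ωE.toReal with hωR
  have hω0 : 0 < ωE := Metric.measure_ball_pos volume 0 one_pos
  have hωt : ωE ≠ ⊤ := measure_ball_lt_top.ne
  have hωRpos : 0 < ωR := ENNReal.toReal_pos hω0.ne' hωt
  have hofω : ENNReal.ofReal ωR = ωE := ENNReal.ofReal_toReal hωt
  have h0vol : volume ({(0:Rn N)} : Set (Rn N)) = 0 := measure_singleton 0
  have hvb : ∀ x : Rn N, x ≠ 0 → v x = γ / ‖x‖ := by
    intro x hx
    have hr : (0:ℝ) < ‖x‖ := norm_pos_iff.2 hx
    have h2 : ‖x‖ ^ (2:ℝ) = ‖x‖^2 := by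
      rw [show (2:ℝ) = ((2:ℕ):ℝ) by norm_num, Real.rpow_natCast]
    rw [hv]
    simp only [hb x hx, norm_smul, Real.norm_eq_abs, h2]
    rw [abs_of_pos (by positivity)]
    field_simp
  -- distribution function for `t ≥ γ`
  have lemA : ∀ t : ℝ, γ ≤ t → distrib B v t = ENNReal.ofReal ((γ/t)^N) * ωE := by
    intro t htγ
    have ht0 : (0:ℝ) < t := hγ.trans_le htγ
    have hrad0 : (0:ℝ) ≤ γ/t := by positivity
    have hrad1 : γ/t ≤ 1 := (div_le_one ht0).2 htγ
    have hset : {x ∈ B | t < |v x|} \ {0} = Metric.ball (0:Rn N) (γ/t) \ {0} := by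
      ext x
      simp only [mem_diff, mem_sep_iff, mem_singleton_iff, hB, Metric.mem_ball,
        dist_zero_right]
      constructor
      · rintro ⟨⟨hxB, hxt⟩, hx0⟩
        have hr : (0:ℝ) < ‖x‖ := norm_pos_iff.2 hx0
        rw [hvb x hx0, abs_of_pos (by positivity), lt_div_iff₀ hr] at hxt
        exact ⟨(lt_div_iff₀ ht0).2 (by nlinarith), hx0⟩
      · rintro ⟨hxr, hx0⟩
        have hr : (0:ℝ) < ‖x‖ := norm_pos_iff.2 hx0
        refine ⟨⟨lt_of_lt_of_le hxr hrad1, ?_⟩, hx0⟩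
        rw [hvb x hx0, abs_of_pos (by positivity), lt_div_iff₀ hr]
        have := (lt_div_iff₀ ht0).1 hxr
        nlinarith
    calc distrib B v t = volume ({x ∈ B | t < |v x|} \ {0}) := (measure_diff_null h0vol).symm
      _ = volume (Metric.ball (0:Rn N) (γ/t) \ {0}) := by rw [hset]
      _ = volume (Metric.ball (0:Rn N) (γ/t)) := measure_diff_null h0vol
      _ = ENNReal.ofReal ((γ/t)^N) * ωE := by
          rw [Measure.addHaar_ball _ _ hrad0, finrank_euclideanSpace_fin]
  have lemAγ : distrib B v γ = ωE := by
    rw [lemA γ le_rfl, div_self hγ.ne', one_pow, ENNReal.ofReal_one, one_mul]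
  have hmono : ∀ t1 t2 : ℝ, t1 ≤ t2 → distrib B v t2 ≤ distrib B v t1 := by
    intro t1 t2 h
    exact measure_mono fun x hx => ⟨hx.1, lt_of_le_of_lt h hx.2⟩
  -- decreasing rearrangement
  have hdec : ∀ s : ℝ, 0 < s → ENNReal.ofReal s < ωE →
      decRearr B v s = ENNReal.ofReal (γ * (ωR/s) ^ (1/(N:ℝ))) := by
    intro s hs hsω
    have hsR : s ≤ ωR := by
      rw [← hofω] at hsω
      exact le_of_lt ((ENNReal.ofReal_lt_ofReal_iff hωRpos).1 hsω)
    set T : ℝ := γ * (ωR/s) ^ (1/(N:ℝ)) with hT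
    have hT0 : 0 < T := by positivity
    have hT1 : γ ≤ T := by
      have h1 : (1:ℝ) ≤ ωR/s := (one_le_div hs).2 hsR
      have : (1:ℝ) = (1:ℝ) ^ (1/(N:ℝ)) := (Real.one_rpow _).symm
      nlinarith [Real.rpow_le_rpow zero_le_one h1 (by positivity : (0:ℝ) ≤ 1/(N:ℝ)),
        Real.one_rpow (1/(N:ℝ))]
    have hTN : T ^ N = γ ^ N * (ωR/s) := by
      rw [hT, mul_pow, one_div, Real.rpow_inv_natCast_pow (by positivity) hN0]
    have hiff : ∀ t : ℝ, γ ≤ t → (s ≤ (γ/t)^N * ωR ↔ t ≤ T) := by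
      intro t htγ
      have ht0 : (0:ℝ) < t := hγ.trans_le htγ
      rw [div_pow, div_mul_eq_mul_div, le_div_iff₀ (by positivity : (0:ℝ) < t^N),
        ← pow_le_pow_iff_left₀ ht0.le hT0.le hN0, hTN, ← mul_div_assoc, le_div_iff₀ hs,
        mul_comm (t^N) s]
    have hS : {t : ℝ | 0 ≤ t ∧ ENNReal.ofReal s ≤ distrib B v t} = Icc 0 T := by
      ext t
      simp only [mem_setOf_eq, mem_Icc]
      constructor
      · rintro ⟨ht0, hts⟩
        refine ⟨ht0, ?_⟩
        by_cases htγ : t ≤ γ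
        · exact htγ.trans hT1
        · push_neg at htγ
          rw [lemA t htγ.le, ← hofω, ← ENNReal.ofReal_mul (by positivity)] at hts
          exact (hiff t htγ.le).1 ((ENNReal.ofReal_le_ofReal_iff (by positivity)).1 hts)
      · rintro ⟨ht0, htT⟩
        refine ⟨ht0, ?_⟩
        by_cases htγ : t ≤ γ
        · calc ENNReal.ofReal s ≤ ωE := hsω.le
            _ = distrib B v γ := lemAγ.symm
            _ ≤ distrib B v t := hmono t γ htγ
        · push_neg at htγ
          rw [lemA t htγ.le, ← hofω, ← ENNReal.ofReal_mul (by positivity)]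
          exact ENNReal.ofReal_le_ofReal ((hiff t htγ.le).2 htT)
    rw [decRearr, hS]
    apply le_antisymm
    · refine sSup_le ?_
      rintro z ⟨t, ⟨ht0, htT⟩, rfl⟩
      exact ENNReal.ofReal_le_ofReal htT
    · exact le_sSup ⟨T, ⟨hT0.le, le_refl T⟩, rfl⟩
  -- weak norm
  have hterm : ∀ t : ℝ, 0 < t → ENNReal.ofReal t < ωE →
      ENNReal.ofReal t ^ (1/(N:ℝ)) * decRearr B v t
        = ENNReal.ofReal (γ * ωR ^ (1/(N:ℝ))) := by
    intro t ht htω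
    rw [hdec t ht htω, ENNReal.ofReal_rpow_of_pos ht,
      ← ENNReal.ofReal_mul (by positivity)]
    congr 1
    rw [Real.div_rpow hωRpos.le ht.le]
    have htN : t ^ (1/(N:ℝ)) ≠ 0 := by positivity
    field_simp
  rw [weakNorm]
  apply le_antisymm
  · refine iSup₂_le fun t ht => ?_
    exact le_of_eq (hterm t ht.1 ht.2)
  · have h1 : 0 < ωR/2 := by positivity
    have h2 : ENNReal.ofReal (ωR/2) < ωE := by
      rw [← hofω]
      exact (ENNReal.ofReal_lt_ofReal_iff hωRpos).2 (by linarith)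
    calc ENNReal.ofReal (γ * ωR ^ (1/(N:ℝ)))
        = ENNReal.ofReal (ωR/2) ^ (1/(N:ℝ)) * decRearr B v (ωR/2) :=
          (hterm _ h1 h2).symm
      _ ≤ _ := le_iSup₂ (f := fun (t:ℝ) (_ : 0 < t ∧ ENNReal.ofReal t < volume B) =>
          ENNReal.ofReal t ^ (1/(N:ℝ)) * decRearr B v t) (ωR/2) ⟨h1, h2⟩
end
end

section
/- Let N ≥ 1, R > 0, α ≥ 0, β ≥ 0 and θ_i > 0 for i = 1,…,N, and let Ω = {x ∈ ℝ^N : Σ_{i=1}^N |x_i|^{θ_i} < R}. Fix j ∈ {1,…,N}. If Σ_{i=1}^N 1/θ_i + β/θ_j > α, then the function x ↦ (Σ_{i=1}^N |x_i|^{θ_i})^{−α} |x_j|^{β} belongs to L^1(Ω). -/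
open MeasureTheory Real Set Filter Topology
open scoped ENNReal NNReal BigOperators

noncomputable section

/-- `|t| ^ p` is integrable on `(-r, r)` when `p > -1`. -/
lemma aux_abs_rpow_integrableOn_Ioo {p r : ℝ} (hp : -1 < p) (hr : 0 < r) :
    IntegrableOn (fun t : ℝ => |t| ^ p) (Ioo (-r) r) := by
  have h1 : IntegrableOn (fun t : ℝ => |t| ^ p) (Ioo 0 r) := by
    refine ((intervalIntegral.integrableOn_Ioo_rpow_iff hr).2 hp).congr_fun (fun t ht => ?_) measurableSet_Ioo
    rw [abs_of_pos ht.1]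
  have h2 : IntegrableOn (fun t : ℝ => |t| ^ p) (Ioo (-r) 0) := by
    rw [← (Measure.measurePreserving_neg (volume : Measure ℝ)).integrableOn_comp_preimage
        (Homeomorph.neg ℝ).measurableEmbedding]
    simp only [Function.comp_def, abs_neg, neg_preimage, neg_Ioo, neg_neg, neg_zero]
    exact h1
  have h0 : Ioo (-r) 0 ∪ Ioo 0 r = Ioo (-r) r \ {0} := by
    ext x
    simp only [mem_union, mem_Ioo, mem_diff, mem_singleton_iff]
    constructor
    · rintro (⟨ha, hb⟩ | ⟨ha, hb⟩)
      · exact ⟨⟨ha, hb.trans hr⟩, hb.ne⟩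
      · exact ⟨⟨(neg_lt_zero.2 hr).trans ha, hb⟩, ha.ne'⟩
    · rintro ⟨⟨ha, hb⟩, hne⟩
      rcases lt_or_gt_of_ne hne with hlt | hlt
      · exact Or.inl ⟨ha, hlt⟩
      · exact Or.inr ⟨hlt, hb⟩
  have hset : Ioo (-r) r =ᵐ[volume] (Ioo (-r) 0 ∪ Ioo 0 r : Set ℝ) := by
    rw [h0]
    exact (diff_ae_eq_self.2
      (measure_mono_null inter_subset_right (measure_singleton 0))).symm
  exact (h2.union h1).congr_set_ae hset

/-- **Lemma 7.1, integrability part**: on the anisotropic ball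
`Ω = {∑ |xᵢ|^{θᵢ} < R}`, the function `(∑ |xᵢ|^{θᵢ})^{-α} |xⱼ|^β` is integrable
whenever `∑ 1/θᵢ + β/θⱼ > α`. -/
theorem anisotropic_integrability
    {N : ℕ} (hN : 1 ≤ N) (R α β : ℝ) (hR : 0 < R) (hα : 0 ≤ α) (hβ : 0 ≤ β)
    (θ : Fin N → ℝ) (hθ : ∀ i, 0 < θ i) (j : Fin N)
    (h : α < ∑ i, 1 / θ i + β / θ j) :
    IntegrableOn (fun x : Rn N => (∑ i, |x i| ^ θ i) ^ (-α) * |x j| ^ β)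
      {x : Rn N | ∑ i, |x i| ^ θ i < R} := by
  -- the exponent budget
  set S : ℝ := (∑ i, 1 / θ i) + β / θ j with hSdef
  have hS : α < S := h
  have hSpos : 0 < S := lt_of_le_of_lt hα hS
  -- the AM-GM weights
  set a : Fin N → ℝ := fun i => ((1 + if i = j then β else 0) / θ i) / S with hadef
  have hnum_pos : ∀ i : Fin N, 0 < 1 + (if i = j then β else 0) := by
    intro i; split <;> linarith
  have ha0 : ∀ i, 0 ≤ a i := fun i =>
    div_nonneg (div_nonneg (hnum_pos i).le (hθ i).le) hSpos.le
  have haθ : ∀ i, a i * θ i = (1 + if i = j then β else 0) / S := by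
    intro i
    simp only [hadef]
    field_simp
    exact div_self (hθ i).ne'
  have hsum_a : ∑ i, a i = 1 := by
    have hnum : ∑ i, ((1 + if i = j then β else 0) / θ i) = S := by
      rw [hSdef]
      have hsplit : ∀ i : Fin N, (1 + if i = j then β else 0) / θ i
          = 1 / θ i + (if i = j then β / θ i else 0) := by
        intro i
        rw [add_div]
        congr 1
        split <;> simp
      rw [Finset.sum_congr rfl fun i _ => hsplit i, Finset.sum_add_distrib,
        Finset.sum_ite_eq' Finset.univ j (fun i => β / θ i)]
      simp
    calc ∑ i, a i = (∑ i, ((1 + if i = j then β else 0) / θ i)) / S := by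
          simp only [hadef]; rw [Finset.sum_div]
      _ = 1 := by rw [hnum, div_self hSpos.ne']
  -- the dominating exponents
  set p : Fin N → ℝ := fun i => (if i = j then β else 0) - α * (a i * θ i) with hpdef
  have hp : ∀ i, -1 < p i := by
    intro i
    have h1 : α / S < 1 := (div_lt_one hSpos).2 hS
    have hq : α * ((1 + if i = j then β else 0) / S) < 1 + (if i = j then β else 0) := by
      have h2 : α * ((1 + if i = j then β else 0) / S)
          = (1 + if i = j then β else 0) * (α / S) := by ring
      rw [h2]
      exact mul_lt_of_lt_one_right (hnum_pos i) h1
    have : p i = (if i = j then β else 0) - α * ((1 + if i = j then β else 0) / S) := by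
      simp only [hpdef]; rw [haθ i]
    rw [this]
    linarith
  -- the box containing Ω
  set r : Fin N → ℝ := fun i => R ^ (θ i)⁻¹ with hrdef
  have hrpos : ∀ i, 0 < r i := fun i => rpow_pos_of_pos hR _
  set box : Set (Fin N → ℝ) := univ.pi fun i => Ioo (-(r i)) (r i) with hboxdef
  have hboxmeas : MeasurableSet box :=
    MeasurableSet.univ_pi fun i => measurableSet_Ioo
  -- integrability of the dominating product on the box
  have hbox : IntegrableOn (fun x : Fin N → ℝ => ∏ i, |x i| ^ p i) box := by
    have hind : ∀ i : Fin N,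
        Integrable (fun t : ℝ => (Ioo (-(r i)) (r i)).indicator (fun s => |s| ^ p i) t) :=
      fun i => (integrable_indicator_iff measurableSet_Ioo).2
        (aux_abs_rpow_integrableOn_Ioo (hp i) (hrpos i))
    have hprod := Integrable.fintype_prod
      (f := fun (i : Fin N) (t : ℝ) => (Ioo (-(r i)) (r i)).indicator (fun s => |s| ^ p i) t) hind
    have hfuneq : (fun x : Fin N → ℝ =>
        ∏ i, (Ioo (-(r i)) (r i)).indicator (fun s => |s| ^ p i) (x i))
        = box.indicator (fun x => ∏ i, |x i| ^ p i) := by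
      funext x
      by_cases hx : x ∈ box
      · rw [indicator_of_mem hx]
        exact Finset.prod_congr rfl fun i _ => indicator_of_mem (hx i (mem_univ i)) _
      · rw [indicator_of_notMem hx]
        rw [hboxdef, mem_univ_pi, not_forall] at hx
        obtain ⟨i, hi⟩ := hx
        exact Finset.prod_eq_zero (Finset.mem_univ i) (indicator_of_notMem hi _)
    rw [← integrable_indicator_iff hboxmeas, ← hfuneq]
    exact hprod
  -- Ω is contained in the box
  have hsub : {x : Fin N → ℝ | ∑ i, |x i| ^ θ i < R} ⊆ box := by
    intro x hx
    intro i _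
    have h1 : |x i| ^ θ i < R :=
      lt_of_le_of_lt (Finset.single_le_sum
        (fun k _ => rpow_nonneg (abs_nonneg _) _) (Finset.mem_univ i)) hx
    have h2 : |x i| < r i := by
      have h3 := rpow_lt_rpow (rpow_nonneg (abs_nonneg _) _) h1 (inv_pos.2 (hθ i))
      rwa [Real.rpow_rpow_inv (abs_nonneg _) (hθ i).ne'] at h3
    exact mem_Ioo.2 (abs_lt.1 h2)
  -- measurability
  have hmeas_s : Measurable fun x : Fin N → ℝ => ∑ i, |x i| ^ θ i :=
    Finset.measurable_sum _ fun i _ => (measurable_pi_apply i).abs.pow measurable_const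
  have hmeasf : Measurable fun x : Fin N → ℝ => (∑ i, |x i| ^ θ i) ^ (-α) * |x j| ^ β :=
    (hmeas_s.pow measurable_const).mul ((measurable_pi_apply j).abs.pow measurable_const)
  -- a.e. every coordinate is nonzero
  have hae : ∀ᵐ x : Fin N → ℝ, ∀ i, x i ≠ 0 := by
    rw [ae_all_iff]
    intro i
    have hz : volume {x : Fin N → ℝ | x i = 0} = 0 := by
      have hseteq : {x : Fin N → ℝ | x i = 0}
          = Set.pi univ (fun k => if k = i then ({0} : Set ℝ) else univ) := by
        ext x
        constructor
        · intro hx k _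
          by_cases hk : k = i
          · subst hk; simpa using hx
          · simp [hk]
        · intro hx
          have := hx i (mem_univ i)
          simpa using this
      rw [hseteq, volume_pi_pi]
      exact Finset.prod_eq_zero (Finset.mem_univ i) (by simp)
    rw [ae_iff]
    simpa using hz
  -- the pointwise bound
  have key : ∀ x : Fin N → ℝ, (∀ i, x i ≠ 0) →
      (∑ i, |x i| ^ θ i) ^ (-α) * |x j| ^ β ≤ ∏ i, |x i| ^ p i := by
    intro x hx
    have habs : ∀ i, 0 < |x i| := fun i => abs_pos.2 (hx i)
    have hy : ∀ i, 0 < |x i| ^ θ i := fun i => rpow_pos_of_pos (habs i) _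
    have hGle : ∏ i, (|x i| ^ θ i) ^ a i ≤ ∑ i, |x i| ^ θ i := by
      refine (Real.geom_mean_le_arith_mean_weighted Finset.univ a (fun i => |x i| ^ θ i)
        (fun i _ => ha0 i) hsum_a (fun i _ => (hy i).le)).trans ?_
      refine Finset.sum_le_sum fun i _ => ?_
      have hai1 : a i ≤ 1 := hsum_a ▸ Finset.single_le_sum
        (fun k _ => ha0 k) (Finset.mem_univ i)
      exact mul_le_of_le_one_left (hy i).le hai1
    have hGpos : 0 < ∏ i, (|x i| ^ θ i) ^ a i :=
      Finset.prod_pos fun i _ => rpow_pos_of_pos (hy i) _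
    have h1 : (∑ i, |x i| ^ θ i) ^ (-α) ≤ (∏ i, (|x i| ^ θ i) ^ a i) ^ (-α) :=
      Real.rpow_le_rpow_of_nonpos hGpos hGle (neg_nonpos.2 hα)
    have h2 : (∏ i, (|x i| ^ θ i) ^ a i) ^ (-α) = ∏ i, |x i| ^ (-α * (a i * θ i)) := by
      rw [← Real.finset_prod_rpow Finset.univ _
        (fun i _ => (rpow_pos_of_pos (hy i) _).le) (-α)]
      refine Finset.prod_congr rfl fun i _ => ?_
      rw [← Real.rpow_mul (abs_nonneg _), ← Real.rpow_mul (abs_nonneg _)]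
      congr 1
      ring
    have h3 : ∏ i, |x i| ^ p i = (∏ i, |x i| ^ (-α * (a i * θ i))) * |x j| ^ β := by
      calc ∏ i, |x i| ^ p i
          = ∏ i, (|x i| ^ (-α * (a i * θ i)) * |x i| ^ (if i = j then β else 0)) := by
            refine Finset.prod_congr rfl fun i _ => ?_
            rw [← Real.rpow_add (habs i)]
            congr 1
            simp only [hpdef]
            ring
        _ = (∏ i, |x i| ^ (-α * (a i * θ i))) * ∏ i, |x i| ^ (if i = j then β else 0) :=
            Finset.prod_mul_distrib
        _ = (∏ i, |x i| ^ (-α * (a i * θ i))) * |x j| ^ β := by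
            congr 1
            calc ∏ i, |x i| ^ (if i = j then β else 0)
                = ∏ i, (if i = j then |x i| ^ β else 1) := by
                  refine Finset.prod_congr rfl fun i _ => ?_
                  split <;> simp
              _ = |x j| ^ β := by
                  rw [Finset.prod_ite_eq' Finset.univ j (fun i => |x i| ^ β)]
                  simp
    calc (∑ i, |x i| ^ θ i) ^ (-α) * |x j| ^ β
        ≤ (∏ i, (|x i| ^ θ i) ^ a i) ^ (-α) * |x j| ^ β :=
          mul_le_mul_of_nonneg_right h1 (rpow_nonneg (abs_nonneg _) _)
      _ = ∏ i, |x i| ^ p i := by rw [h2]; exact h3.symm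
  -- the statement on the pi space
  have hmain : IntegrableOn (fun x : Fin N → ℝ => (∑ i, |x i| ^ θ i) ^ (-α) * |x j| ^ β)
      {x : Fin N → ℝ | ∑ i, |x i| ^ θ i < R} := by
    have hg : IntegrableOn (fun x : Fin N → ℝ => ∏ i, |x i| ^ p i)
        {x : Fin N → ℝ | ∑ i, |x i| ^ θ i < R} := hbox.mono_set hsub
    refine Integrable.mono' hg hmeasf.aestronglyMeasurable.restrict ?_
    filter_upwards [hae.filter_mono (ae_mono Measure.restrict_le_self)] with x hx
    have hb := key x hx
    rwa [Real.norm_eq_abs, abs_of_nonneg (mul_nonneg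
      (rpow_nonneg (Finset.sum_nonneg fun i _ => rpow_nonneg (abs_nonneg _) _) _)
      (rpow_nonneg (abs_nonneg _) _))]
  -- transfer to the Euclidean space
  rw [← ((EuclideanSpace.volume_preserving_symm_measurableEquiv_toLp (Fin N)).symm).integrableOn_comp_preimage
    (MeasurableEquiv.measurableEmbedding _)]
  exact hmain

end
end

section
/- Let N ≥ 1, R > 0, α ≥ 0, β ≥ 0 and θ_i > 0 for i = 1,…,N, and let Ω = {x ∈ ℝ^N : Σ_{i=1}^N |x_i|^{θ_i} < R}. Fix j ∈ {1,…,N}. If Σ_{i=1}^N 1/θ_i + β/θ_j ≤ α, then the function x ↦ (Σ_{i=1}^N |x_i|^{θ_i})^{−α} |x_j|^{β} does not belong to L^1(Ω) (its integral over Ω is infinite). -/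
open MeasureTheory Real Set Filter Topology
open scoped ENNReal NNReal BigOperators

noncomputable section

lemma key_identity {N : ℕ} (β : ℝ) (θ : Fin N → ℝ)
    (j : Fin N) (u : ℝ) (hu : 0 < u) :
    ((u/2) ^ (1/θ j)) ^ β *
      ∏ i, (if i = j then u ^ (1/θ j) - (u/2) ^ (1/θ j) else u ^ (1/θ i)) =
    u ^ ((∑ i, 1/θ i) + β/θ j) *
      ((1/2:ℝ) ^ ((1/θ j) * β) * (1 - (1/2:ℝ) ^ (1/θ j))) := by
  have hu2 : (0:ℝ) ≤ u / 2 := by positivity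
  have hprod : ∏ i, (if i = j then u ^ (1/θ j) - (u/2) ^ (1/θ j) else u ^ (1/θ i))
      = (u ^ (1/θ j) - (u/2) ^ (1/θ j)) * ∏ i ∈ Finset.univ.erase j, u ^ (1/θ i) := by
    rw [← Finset.mul_prod_erase Finset.univ _ (Finset.mem_univ j)]
    simp only [if_pos rfl]
    congr 1
    exact Finset.prod_congr rfl (fun i hi => by rw [if_neg (Finset.ne_of_mem_erase hi)])
  rw [hprod, ← Real.rpow_sum_of_pos hu]
  have h2 : (u/2) ^ (1/θ j) = u ^ (1/θ j) * (1/2:ℝ) ^ (1/θ j) := by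
    rw [div_eq_mul_inv, ← Real.mul_rpow hu.le (by norm_num)]
    norm_num
  have h3 : ((u/2) ^ (1/θ j)) ^ β = u ^ ((1/θ j) * β) * (1/2:ℝ) ^ ((1/θ j) * β) := by
    rw [← Real.rpow_mul hu2, div_eq_mul_inv, ← Real.mul_rpow hu.le (by norm_num)]
    norm_num
  rw [h3, h2]
  have hsum : ∑ i, 1/θ i = 1/θ j + ∑ i ∈ Finset.univ.erase j, 1/θ i :=
    (Finset.add_sum_erase Finset.univ _ (Finset.mem_univ j)).symm
  have hβθ : (1/θ j) * β = β / θ j := by ring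
  rw [hsum, hβθ]
  have e1 : u ^ (1/θ j) - u ^ (1/θ j) * (1/2:ℝ) ^ (1/θ j)
      = u ^ (1/θ j) * (1 - (1/2:ℝ) ^ (1/θ j)) := by ring
  rw [e1]
  rw [show 1/θ j + ∑ i ∈ Finset.univ.erase j, 1/θ i + β/θ j
      = β/θ j + (1/θ j + ∑ i ∈ Finset.univ.erase j, 1/θ i) by ring]
  rw [Real.rpow_add hu, Real.rpow_add hu, ← hβθ]
  ring

/-- **Lemma 7.1, non-integrability part**: on the anisotropic ball
`Ω = {∑ |xᵢ|^{θᵢ} < R}`, the function `(∑ |xᵢ|^{θᵢ})^{-α} |xⱼ|^β` is not integrable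
when `∑ 1/θᵢ + β/θⱼ ≤ α`; its (lower) integral over `Ω` is infinite. -/
theorem anisotropic_non_integrability
    {N : ℕ} (hN : 1 ≤ N) (R α β : ℝ) (hR : 0 < R) (hα : 0 ≤ α) (hβ : 0 ≤ β)
    (θ : Fin N → ℝ) (hθ : ∀ i, 0 < θ i) (j : Fin N)
    (h : ∑ i, 1 / θ i + β / θ j ≤ α) :
    ¬ IntegrableOn (fun x : Rn N => (∑ i, |x i| ^ θ i) ^ (-α) * |x j| ^ β)
        {x : Rn N | ∑ i, |x i| ^ θ i < R} ∧
    ∫⁻ x in {x : Rn N | ∑ i, |x i| ^ θ i < R},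
        ENNReal.ofReal ((∑ i, |x i| ^ θ i) ^ (-α) * |x j| ^ β) = ⊤ := by
  haveI : Nonempty (Fin N) := ⟨⟨0, hN⟩⟩
  have hNpos : (0:ℝ) < (N:ℝ) := by exact_mod_cast hN.trans_lt' (by norm_num)
  set γ : ℝ := (∑ i, 1/θ i) + β/θ j with hγ
  set u : ℕ → ℝ := fun k => R / ((N:ℝ) * 2 ^ k) with hu
  have hupos : ∀ k, 0 < u k := fun k => by
    simp only [hu]; positivity
  have huR : ∀ k, (N:ℝ) * u k ≤ R := fun k => by
    rw [hu]
    rw [mul_div_assoc']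
    rw [div_le_iff₀ (by positivity)]
    have hpow : (1:ℝ) ≤ 2 ^ k := one_le_pow₀ one_le_two
    nlinarith [mul_nonneg (mul_nonneg hNpos.le hR.le) (sub_nonneg.mpr hpow)]
  have hu_half : ∀ {m n : ℕ}, m < n → u n ≤ u m / 2 := by
    intro m n hmn
    simp only [hu, div_div]
    apply div_le_div_of_nonneg_left hR.le (by positivity)
    rw [mul_assoc]
    have h2 : (2:ℝ) ^ m * 2 ≤ 2 ^ n := by
      rw [← pow_succ]
      exact pow_le_pow_right₀ one_le_two hmn
    nlinarith [hNpos]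
  -- the boxes
  set e := (MeasurableEquiv.toLp 2 (Fin N → ℝ)).symm with he
  set I : ℕ → Fin N → Set ℝ := fun k i =>
    if i = j then Ioo ((u k / 2) ^ (1/θ j)) (u k ^ (1/θ j)) else Ioo 0 (u k ^ (1/θ i)) with hI
  set B : ℕ → Set (Rn N) := fun k => e ⁻¹' (Set.univ.pi (I k)) with hB
  have hmemB : ∀ k (x : Rn N), x ∈ B k → ∀ i, x i ∈ I k i := by
    intro k x hx i
    exact hx i (Set.mem_univ i)
  -- pointwise bounds in a box
  have hrpow_inv : ∀ (i : Fin N) (v : ℝ), 0 < v → (v ^ (1/θ i)) ^ θ i = v := by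
    intro i v hv
    rw [← Real.rpow_mul hv.le, one_div_mul_cancel (hθ i).ne', Real.rpow_one]
  have hxI : ∀ k (x : Rn N), x ∈ B k → ∀ i, 0 < x i ∧ x i < u k ^ (1/θ i) := by
    intro k x hx i
    have hxi := hmemB k x hx i
    by_cases hij : i = j
    · subst hij
      rw [hI] at hxi; simp only [if_pos rfl] at hxi
      exact ⟨lt_trans (Real.rpow_pos_of_pos (by positivity) _) hxi.1, hxi.2⟩
    · rw [hI] at hxi; simp only [if_neg hij] at hxi
      exact ⟨hxi.1, hxi.2⟩
  have hxj : ∀ k (x : Rn N), x ∈ B k → (u k / 2) ^ (1/θ j) ≤ x j := by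
    intro k x hx
    have hxi := hmemB k x hx j
    rw [hI] at hxi; simp only [if_pos rfl] at hxi
    exact hxi.1.le
  have hSlt : ∀ k (x : Rn N), x ∈ B k → ∑ i, |x i| ^ θ i < (N:ℝ) * u k := by
    intro k x hx
    have : ∑ i, |x i| ^ θ i < ∑ _i : Fin N, u k := by
      apply Finset.sum_lt_sum_of_nonempty Finset.univ_nonempty
      intro i _
      have hxi := hxI k x hx i
      calc |x i| ^ θ i = (x i) ^ θ i := by rw [abs_of_pos hxi.1]
        _ < (u k ^ (1/θ i)) ^ θ i :=
            Real.rpow_lt_rpow hxi.1.le hxi.2 (hθ i)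
        _ = u k := hrpow_inv i (u k) (hupos k)
    simpa [mul_comm] using this
  have hSpos : ∀ k (x : Rn N), x ∈ B k → 0 < ∑ i, |x i| ^ θ i := by
    intro k x hx
    have hj : 0 < |x j| ^ θ j :=
      Real.rpow_pos_of_pos (abs_pos.mpr (hxI k x hx j).1.ne') _
    exact lt_of_lt_of_le hj
      (Finset.single_le_sum (fun i _ => Real.rpow_nonneg (abs_nonneg _) _)
        (Finset.mem_univ j))
  have hBsub : ∀ k, B k ⊆ {x : Rn N | ∑ i, |x i| ^ θ i < R} := by
    intro k x hx
    exact lt_of_lt_of_le (hSlt k x hx) (huR k)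
  have hIio : ∀ k i, MeasurableSet (I k i) := by
    intro k i
    simp only [hI]
    split <;> exact measurableSet_Ioo
  have hImeas : ∀ k, MeasurableSet (B k) :=
    fun k => e.measurable (MeasurableSet.univ_pi (fun i => hIio k i))
  have hdisj : Pairwise (Function.onFun Disjoint B) := by
    apply (pairwise_disjoint_on B).2
    intro m n hmn
    rw [Set.disjoint_left]
    intro x hxm hxn
    have h1 : x j < u n ^ (1/θ j) := (hxI n x hxn j).2
    have h2 : (u m / 2) ^ (1/θ j) ≤ x j := hxj m x hxm
    have h3 : u n ^ (1/θ j) ≤ (u m / 2) ^ (1/θ j) :=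
      Real.rpow_le_rpow (hupos n).le (hu_half hmn) (one_div_nonneg.mpr (hθ j).le)
    linarith
  -- volume of the boxes
  set ℓ : ℕ → Fin N → ℝ := fun k i =>
    if i = j then u k ^ (1/θ j) - (u k / 2) ^ (1/θ j) else u k ^ (1/θ i) with hℓ
  have hℓnonneg : ∀ k i, 0 ≤ ℓ k i := by
    intro k i
    rw [hℓ]
    by_cases hij : i = j
    · simp only [if_pos hij]
      have : (u k / 2) ^ (1/θ j) ≤ u k ^ (1/θ j) :=
        Real.rpow_le_rpow (by positivity) (half_le_self (hupos k).le)
          (one_div_nonneg.mpr (hθ j).le)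
      linarith
    · simp only [if_neg hij]
      positivity
  have hvol : ∀ k, volume (B k) = ENNReal.ofReal (∏ i, ℓ k i) := by
    intro k
    have h1 : volume (B k) = volume (Set.univ.pi (I k)) :=
      (EuclideanSpace.volume_preserving_symm_measurableEquiv_toLp (Fin N)).measure_preimage
        (MeasurableSet.univ_pi fun i => hIio k i).nullMeasurableSet
    rw [h1, volume_pi_pi, ENNReal.ofReal_prod_of_nonneg (fun i _ => hℓnonneg k i)]
    apply Finset.prod_congr rfl
    intro i _
    simp only [hI, hℓ]
    by_cases hij : i = j
    · simp only [if_pos hij, Real.volume_Ioo]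
    · simp only [if_neg hij, Real.volume_Ioo, sub_zero]
  -- the constant lower bound on each box
  set c : ℕ → ℝ := fun k => ((N:ℝ) * u k) ^ (-α) * ((u k / 2) ^ (1/θ j)) ^ β with hc
  have hcpos : ∀ k, 0 < c k := by
    intro k
    rw [hc]
    have h1 : (0:ℝ) < (N:ℝ) * u k := by positivity
    exact mul_pos (Real.rpow_pos_of_pos h1 _)
      (Real.rpow_pos_of_pos (Real.rpow_pos_of_pos (by positivity) _) _)
  have hlow : ∀ k (x : Rn N), x ∈ B k →
      c k ≤ (∑ i, |x i| ^ θ i) ^ (-α) * |x j| ^ β := by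
    intro k x hx
    rw [hc]
    apply mul_le_mul
    · exact Real.rpow_le_rpow_of_nonpos (hSpos k x hx) (hSlt k x hx).le (neg_nonpos.mpr hα)
    · apply Real.rpow_le_rpow (by positivity) _ hβ
      calc (u k / 2) ^ (1/θ j) ≤ x j := hxj k x hx
        _ ≤ |x j| := le_abs_self _
    · positivity
    · exact (Real.rpow_pos_of_pos (hSpos k x hx) _).le
  -- the uniform constant ρ
  set K : ℝ := (1/2:ℝ) ^ ((1/θ j) * β) * (1 - (1/2:ℝ) ^ (1/θ j)) with hK
  have hKpos : 0 < K := by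
    rw [hK]
    apply mul_pos (Real.rpow_pos_of_pos (by norm_num) _)
    have : (1/2:ℝ) ^ (1/θ j) < 1 :=
      Real.rpow_lt_one (by norm_num) (by norm_num) (one_div_pos.mpr (hθ j))
    linarith
  set ρ : ℝ := R ^ (γ - α) * ((N:ℝ) ^ (-γ) * K) with hρ
  have hρpos : 0 < ρ := by
    rw [hρ]
    exact mul_pos (Real.rpow_pos_of_pos hR _)
      (mul_pos (Real.rpow_pos_of_pos hNpos _) hKpos)
  -- main per-box estimate on the real side
  have hcℓ : ∀ k, ρ ≤ c k * ∏ i, ℓ k i := by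
    intro k
    have hNu : (0:ℝ) < (N:ℝ) * u k := by positivity
    have hkey := key_identity β θ j (u k) (hupos k)
    have e1 : c k * ∏ i, ℓ k i
        = ((N:ℝ) * u k) ^ (-α) * (u k ^ γ * K) := by
      rw [hγ, hK, ← hkey, hc, hℓ]
      ring
    have e2 : u k ^ γ = ((N:ℝ) * u k) ^ γ * (N:ℝ) ^ (-γ) := by
      rw [Real.mul_rpow hNpos.le (hupos k).le, Real.rpow_neg hNpos.le]
      field_simp
    have e3 : ((N:ℝ) * u k) ^ (-α) * ((N:ℝ) * u k) ^ γ
        = ((N:ℝ) * u k) ^ (γ - α) := by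
      rw [← Real.rpow_add hNu, neg_add_eq_sub]
    have e4 : c k * ∏ i, ℓ k i = ((N:ℝ) * u k) ^ (γ - α) * ((N:ℝ) ^ (-γ) * K) := by
      rw [e1, e2, ← e3]; ring
    rw [e4, hρ]
    apply mul_le_mul_of_nonneg_right _ (by positivity)
    exact Real.rpow_le_rpow_of_nonpos hNu (huR k) (by linarith [hγ ▸ h])
  -- per-box lintegral estimate
  have hbox : ∀ k, ENNReal.ofReal ρ ≤
      ∫⁻ x in B k, ENNReal.ofReal ((∑ i, |x i| ^ θ i) ^ (-α) * |x j| ^ β) := by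
    intro k
    calc ENNReal.ofReal ρ ≤ ENNReal.ofReal (c k * ∏ i, ℓ k i) :=
          ENNReal.ofReal_le_ofReal (hcℓ k)
      _ = ENNReal.ofReal (c k) * ENNReal.ofReal (∏ i, ℓ k i) :=
          ENNReal.ofReal_mul (hcpos k).le
      _ = ENNReal.ofReal (c k) * volume (B k) := by rw [hvol k]
      _ = ∫⁻ _x in B k, ENNReal.ofReal (c k) := (setLIntegral_const _ _).symm
      _ ≤ ∫⁻ x in B k, ENNReal.ofReal ((∑ i, |x i| ^ θ i) ^ (-α) * |x j| ^ β) :=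
          setLIntegral_mono' (hImeas k)
            (fun x hx => ENNReal.ofReal_le_ofReal (hlow k x hx))
  -- conclusion
  have hmain : ∫⁻ x in {x : Rn N | ∑ i, |x i| ^ θ i < R},
      ENNReal.ofReal ((∑ i, |x i| ^ θ i) ^ (-α) * |x j| ^ β) = ⊤ := by
    refine top_le_iff.mp ?_
    calc (⊤ : ℝ≥0∞) = ∑' _k : ℕ, ENNReal.ofReal ρ :=
          (ENNReal.tsum_const_eq_top_of_ne_zero
            (by simpa using ENNReal.ofReal_pos.mpr hρpos |>.ne')).symm
      _ ≤ ∑' k : ℕ, ∫⁻ x in B k,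
            ENNReal.ofReal ((∑ i, |x i| ^ θ i) ^ (-α) * |x j| ^ β) :=
          ENNReal.tsum_le_tsum hbox
      _ = ∫⁻ x in ⋃ k, B k,
            ENNReal.ofReal ((∑ i, |x i| ^ θ i) ^ (-α) * |x j| ^ β) :=
          (lintegral_iUnion hImeas hdisj _).symm
      _ ≤ ∫⁻ x in {x : Rn N | ∑ i, |x i| ^ θ i < R},
            ENNReal.ofReal ((∑ i, |x i| ^ θ i) ^ (-α) * |x j| ^ β) :=
          lintegral_mono_set (Set.iUnion_subset hBsub)
  refine ⟨fun hint => ?_, hmain⟩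
  have hfin := hint.lintegral_lt_top
  rw [hmain] at hfin
  exact lt_irrefl _ hfin

end
end

section
/- Let N > 2, let p_i > 1 with 1 < p̄ < N, let θ_i > 1 for i = 1,…,N, let R > 0 and γ > 0. Set Ω = {x ∈ ℝ^N : Σ_{i=1}^N |x_i|^{θ_i} < R} and u(x) = (Σ_{i=1}^N |x_i|^{θ_i})^{−γ} − (Σ_{i=1}^N R^{θ_i})^{−γ}. Then: (a) if γ < (Σ_{j=1}^N 1/θ_j)·(N−p̄)/(p̄N), then |∏_{i=1}^N ∂_{x_i} u|^{1/N} ∈ L^{p̄}(Ω); (b) for each fixed i, if γ < Σ_{j=1}^N 1/(θ_j p_i) − 1/θ_i, then ∂_{x_i} u ∈ L^{p_i}(Ω); (c) if the condition in (b) holds for every i = 1,…,N, then the condition in (a) holds and moreover u ∈ L^{p̄*}(Ω). -/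
open MeasureTheory Real Set Filter Topology
open scoped ENNReal NNReal BigOperators

noncomputable section

/-- The `i`-th partial derivative of `f : ℝ^N → ℝ`. -/
noncomputable def pd {N : ℕ} (i : Fin N) (f : Rn N → ℝ) (x : Rn N) : ℝ :=
  fderiv ℝ f x (EuclideanSpace.single i 1)

lemma pi_scale {N : ℕ} (c : Fin N → ℝ) (hc : ∀ i, 0 < c i) (A : Set (Fin N → ℝ)) :
    volume ((fun y : Fin N → ℝ => fun i => c i * y i) '' A)
      = ENNReal.ofReal (∏ i, c i) * volume A := by
  have hdet : LinearMap.det (Matrix.toLin' (Matrix.diagonal c)) = ∏ i, c i := by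
    rw [LinearMap.det_toLin', Matrix.det_diagonal]
  have himg : (fun y : Fin N → ℝ => fun i => c i * y i) '' A
      = (Matrix.toLin' (Matrix.diagonal c)) '' A := by
    apply Set.image_congr
    intro y _
    funext i
    simp [Matrix.toLin'_apply, Matrix.mulVec_diagonal]
  rw [himg, Measure.addHaar_image_linearMap, hdet, abs_of_pos (Finset.prod_pos fun i _ => hc i)]

lemma aniso_rescale_term {θ s a : ℝ} (hθ0 : θ ≠ 0) (hs : 0 < s) :
    |s ^ (1 / θ) * a| ^ θ = s * |a| ^ θ := by
  rw [abs_mul, Real.mul_rpow (abs_nonneg _) (abs_nonneg _),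
    abs_of_pos (Real.rpow_pos_of_pos hs _), ← Real.rpow_mul hs.le,
    one_div, inv_mul_cancel₀ hθ0, Real.rpow_one]

lemma aniso_scale_set {N : ℕ} (θ : Fin N → ℝ) (hθ : ∀ i, 1 < θ i) {s : ℝ} (hs : 0 < s) :
    {y : Fin N → ℝ | ∑ i, |y i| ^ θ i < s}
      = (fun y : Fin N → ℝ => fun i => s ^ (1 / θ i) * y i) ''
        {y : Fin N → ℝ | ∑ i, |y i| ^ θ i < 1} := by
  have hθ0 : ∀ i, θ i ≠ 0 := fun i => by linarith [hθ i]
  ext y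
  constructor
  · intro (hy : ∑ i, |y i| ^ θ i < s)
    refine ⟨fun i => (s ^ (1 / θ i))⁻¹ * y i, ?_, ?_⟩
    · show ∑ i, _ < (1:ℝ)
      have key : ∀ i, |(s ^ (1 / θ i))⁻¹ * y i| ^ θ i = s⁻¹ * |y i| ^ θ i := by
        intro i
        rw [← Real.inv_rpow hs.le, aniso_rescale_term (hθ0 i) (inv_pos.2 hs) ]
      rw [Finset.sum_congr rfl fun i _ => key i, ← Finset.mul_sum]
      rw [inv_mul_lt_iff₀ hs, mul_one]
      exact hy
    · funext i
      field_simp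
  · rintro ⟨z, hz, rfl⟩
    show ∑ i, _ < s
    calc ∑ i, |s ^ (1/θ i) * z i| ^ θ i = ∑ i, s * |z i| ^ θ i :=
          Finset.sum_congr rfl fun i _ => aniso_rescale_term (hθ0 i) hs 
      _ = s * ∑ i, |z i| ^ θ i := by rw [Finset.mul_sum]
      _ < s * 1 := (mul_lt_mul_iff_right₀ hs).2 hz
      _ = s := mul_one s

lemma aniso_meas_set {N : ℕ} (θ : Fin N → ℝ) (hθ : ∀ i, 1 < θ i) (s : ℝ) :
    MeasurableSet {y : Fin N → ℝ | ∑ i, |y i| ^ θ i < s} := by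
  have hcont : Continuous fun y : Fin N → ℝ => ∑ i, |y i| ^ θ i := by
    apply continuous_finset_sum
    intro i _
    exact ((continuous_apply i).abs).rpow_const (fun x => Or.inr (by linarith [hθ i]))
  exact hcont.measurable measurableSet_Iio

lemma aniso_unit_vol_lt_top {N : ℕ} (θ : Fin N → ℝ) (hθ : ∀ i, 1 < θ i) :
    volume {y : Fin N → ℝ | ∑ i, |y i| ^ θ i < 1} < ⊤ := by
  have hsub : {y : Fin N → ℝ | ∑ i, |y i| ^ θ i < 1} ⊆ Set.pi Set.univ (fun _ => Icc (-1:ℝ) 1) := by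
    intro y hy
    intro i _
    have h1 : |y i| ^ θ i < 1 := by
      calc |y i| ^ θ i ≤ ∑ j, |y j| ^ θ j :=
            Finset.single_le_sum (fun j _ => Real.rpow_nonneg (abs_nonneg _) _) (Finset.mem_univ i)
        _ < 1 := hy
    have h2 : |y i| ≤ 1 := by
      by_contra h
      push_neg at h
      have : (1:ℝ) ≤ |y i| ^ θ i := Real.one_le_rpow h.le (by linarith [hθ i])
      linarith
    constructor <;> [linarith [neg_abs_le (y i)]; linarith [le_abs_self (y i)]]
  calc volume {y : Fin N → ℝ | ∑ i, |y i| ^ θ i < 1}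
      ≤ volume (Set.pi Set.univ (fun _ : Fin N => Icc (-1:ℝ) 1)) := measure_mono hsub
    _ = ∏ _i : Fin N, volume (Icc (-1:ℝ) 1) := volume_pi_pi _
    _ < ⊤ := by
        simp only [Real.volume_Icc]
        exact ENNReal.prod_lt_top fun i _ => ENNReal.ofReal_lt_top

lemma aniso_vol_eq {N : ℕ} (θ : Fin N → ℝ) (hθ : ∀ i, 1 < θ i) {s : ℝ} (hs : 0 < s) :
    volume {y : Fin N → ℝ | ∑ i, |y i| ^ θ i < s}
      = ENNReal.ofReal (s ^ (∑ i, 1 / θ i)) * volume {y : Fin N → ℝ | ∑ i, |y i| ^ θ i < 1} := by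
  rw [aniso_scale_set θ hθ hs, pi_scale _ (fun i => Real.rpow_pos_of_pos hs _)]
  congr 1
  rw [Real.rpow_sum_of_pos hs]

lemma aniso_vol_euclidean {N : ℕ} (θ : Fin N → ℝ) (hθ : ∀ i, 1 < θ i) (s : ℝ) :
    volume {x : Rn N | ∑ i, |x i| ^ θ i < s}
      = volume {y : Fin N → ℝ | ∑ i, |y i| ^ θ i < s} := by
  have h := (EuclideanSpace.volume_preserving_symm_measurableEquiv_toLp (Fin N)).measure_preimage
    (aniso_meas_set θ hθ s).nullMeasurableSet
  exact h

lemma aniso_vol_bound {N : ℕ} (θ : Fin N → ℝ) (hθ : ∀ i, 1 < θ i) {s : ℝ} (hs : 0 < s) :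
    volume {x : Rn N | ∑ i, |x i| ^ θ i < s}
      ≤ ENNReal.ofReal (s ^ (∑ i, 1 / θ i)) * volume {y : Fin N → ℝ | ∑ i, |y i| ^ θ i < 1} := by
  rw [aniso_vol_euclidean θ hθ s, aniso_vol_eq θ hθ hs]

lemma aniso_S_continuous {N : ℕ} (θ : Fin N → ℝ) (hθ : ∀ i, 1 < θ i) :
    Continuous fun x : Rn N => ∑ i, |x i| ^ θ i := by
  apply continuous_finset_sum
  intro i _
  exact (((EuclideanSpace.proj (𝕜 := ℝ) i).continuous).abs).rpow_const
    (fun x => Or.inr (by linarith [hθ i]))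

lemma lint_S_finite {N : ℕ} (θ : Fin N → ℝ) (hθ : ∀ i, 1 < θ i) {R β : ℝ}
    (hR : 0 < R) (hβ : 0 < β) (hβσ : β < ∑ i, 1 / θ i) :
    ∫⁻ x in {x : Rn N | ∑ i, |x i| ^ θ i < R},
      ENNReal.ofReal ((∑ i, |x i| ^ θ i) ^ (-β)) < ⊤ := by
  set σ : ℝ := ∑ i, 1 / θ i with hσdef
  have hσ : 0 < σ := lt_trans hβ hβσ
  set S : Rn N → ℝ := fun x => ∑ i, |x i| ^ θ i with hSdef
  set Ω : Set (Rn N) := {x : Rn N | S x < R} with hΩdef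
  set c1 : ℝ≥0∞ := volume {y : Fin N → ℝ | ∑ i, |y i| ^ θ i < 1} with hc1def
  have hc1 : c1 < ⊤ := aniso_unit_vol_lt_top θ hθ
  have hScont : Continuous S := aniso_S_continuous θ hθ
  have hSnn : ∀ x, 0 ≤ S x := fun x =>
    Finset.sum_nonneg fun i _ => Real.rpow_nonneg (abs_nonneg _) _
  set μ : Measure (Rn N) := volume.restrict Ω with hμdef
  have hfm : AEMeasurable (fun x => S x ^ (-β)) μ :=
    (hScont.measurable.pow_const _).aemeasurable
  rw [lintegral_eq_lintegral_meas_lt μ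
      (Eventually.of_forall fun x => Real.rpow_nonneg (hSnn x) _) hfm]
  set T : ℝ := R ^ (-β) with hTdef
  have hT : 0 < T := Real.rpow_pos_of_pos hR _
  -- the global bound
  have hVfin : volume Ω < ⊤ := by
    calc volume Ω ≤ ENNReal.ofReal (R ^ σ) * c1 := aniso_vol_bound θ hθ hR
      _ < ⊤ := ENNReal.mul_lt_top ENNReal.ofReal_lt_top hc1
  -- tail bound
  have htail : ∀ t : ℝ, t ∈ Ioi T →
      μ {a : Rn N | t < S a ^ (-β)} ≤ ENNReal.ofReal (t ^ (-(σ / β))) * c1 := by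
    intro t ht
    have ht0 : 0 < t := lt_trans hT ht
    have hsub : {a : Rn N | t < S a ^ (-β)} ⊆ {a : Rn N | S a < t ^ (-β)⁻¹} := by
      intro a (ha : t < S a ^ (-β))
      have hSa : 0 < S a := by
        rcases eq_or_lt_of_le (hSnn a) with h | h
        · rw [← h, Real.zero_rpow (by linarith : -β ≠ 0)] at ha; linarith
        · exact h
      exact (Real.lt_rpow_inv_iff_of_neg hSa ht0 (by linarith : -β < 0)).2 ha
    calc μ {a : Rn N | t < S a ^ (-β)} ≤ volume {a : Rn N | t < S a ^ (-β)} :=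
          Measure.restrict_le_self _
      _ ≤ volume {a : Rn N | S a < t ^ (-β)⁻¹} := measure_mono hsub
      _ ≤ ENNReal.ofReal ((t ^ (-β)⁻¹) ^ σ) * c1 :=
          aniso_vol_bound θ hθ (Real.rpow_pos_of_pos ht0 _)
      _ = ENNReal.ofReal (t ^ (-(σ / β))) * c1 := by
          rw [← Real.rpow_mul ht0.le]
          congr 2
          rw [inv_mul_eq_div, div_neg_eq_neg_div]
  calc ∫⁻ t in Ioi 0, μ {a : Rn N | t < S a ^ (-β)}
      = ∫⁻ t in Ioc 0 T ∪ Ioi T, μ {a : Rn N | t < S a ^ (-β)} := by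
        rw [Ioc_union_Ioi_eq_Ioi hT.le]
    _ ≤ (∫⁻ t in Ioc 0 T, μ {a : Rn N | t < S a ^ (-β)})
        + ∫⁻ t in Ioi T, μ {a : Rn N | t < S a ^ (-β)} := lintegral_union_le _ _ _
    _ < ⊤ := by
        apply ENNReal.add_lt_top.2
        constructor
        · calc ∫⁻ t in Ioc 0 T, μ {a : Rn N | t < S a ^ (-β)}
              ≤ ∫⁻ _t in Ioc 0 T, volume Ω := by
                apply lintegral_mono
                intro t
                calc μ {a : Rn N | t < S a ^ (-β)} ≤ μ univ := measure_mono (subset_univ _)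
                  _ = volume Ω := by rw [hμdef, Measure.restrict_apply_univ]
            _ = volume Ω * volume (Ioc 0 T) := setLIntegral_const _ _
            _ < ⊤ := ENNReal.mul_lt_top hVfin (by simp [Real.volume_Ioc])
        · calc ∫⁻ t in Ioi T, μ {a : Rn N | t < S a ^ (-β)}
              ≤ ∫⁻ t in Ioi T, ENNReal.ofReal (t ^ (-(σ / β))) * c1 :=
                setLIntegral_mono' measurableSet_Ioi htail
            _ = (∫⁻ t in Ioi T, ENNReal.ofReal (t ^ (-(σ / β)))) * c1 :=
                lintegral_mul_const _ (by measurability)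
            _ < ⊤ := by
                apply ENNReal.mul_lt_top _ hc1
                have hexp : -(σ / β) < -1 := by
                  rw [neg_lt_neg_iff, lt_div_iff₀ hβ]
                  linarith
                have hint : IntegrableOn (fun t : ℝ => t ^ (-(σ / β))) (Ioi T) :=
                  integrableOn_Ioi_rpow_of_lt hexp hT
                have := hint.2
                rw [HasFiniteIntegral] at this
                convert this using 1
                apply setLIntegral_congr_fun measurableSet_Ioi
                intro t ht
                dsimp only
                rw [← Real.enorm_eq_ofReal (Real.rpow_nonneg (le_of_lt (lt_trans hT ht)) _)]

lemma memLp_aux {N : ℕ} (θ : Fin N → ℝ) (hθ : ∀ i, 1 < θ i) {R : ℝ} (hR : 0 < R)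
    {f : Rn N → ℝ}
    (hf : AEStronglyMeasurable f (volume.restrict {x : Rn N | ∑ i, |x i| ^ θ i < R}))
    {C β q : ℝ} (hC : 0 ≤ C) (hq : 0 < q) (hβ : 0 < β) (hβσ : β * q < ∑ i, 1 / θ i)
    (hbound : ∀ᵐ x ∂(volume.restrict {x : Rn N | ∑ i, |x i| ^ θ i < R}),
      |f x| ≤ C * (∑ i, |x i| ^ θ i) ^ (-β)) :
    MemLp f (ENNReal.ofReal q) (volume.restrict {x : Rn N | ∑ i, |x i| ^ θ i < R}) := by
  set S : Rn N → ℝ := fun x => ∑ i, |x i| ^ θ i with hSdef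
  have hSnn : ∀ x, 0 ≤ S x := fun x =>
    Finset.sum_nonneg fun i _ => Real.rpow_nonneg (abs_nonneg _) _
  set μ := volume.restrict {x : Rn N | ∑ i, |x i| ^ θ i < R} with hμdef
  refine ⟨hf, ?_⟩
  have hp0 : ENNReal.ofReal q ≠ 0 := by simp [ENNReal.ofReal_eq_zero]; linarith
  rw [eLpNorm_eq_lintegral_rpow_enorm_toReal hp0 ENNReal.ofReal_ne_top]
  refine ENNReal.rpow_lt_top_of_nonneg (by positivity) ?_
  rw [ENNReal.toReal_ofReal hq.le]
  have hptwise : ∀ᵐ x ∂μ, (‖f x‖₊ : ℝ≥0∞) ^ q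
      ≤ ENNReal.ofReal (C ^ q) * ENNReal.ofReal (S x ^ (-(β * q))) := by
    filter_upwards [hbound] with x hx
    calc (‖f x‖₊ : ℝ≥0∞) ^ q = ENNReal.ofReal |f x| ^ q := by rw [← Real.enorm_eq_ofReal_abs]; rfl
      _ ≤ ENNReal.ofReal (C * S x ^ (-β)) ^ q :=
          ENNReal.rpow_le_rpow (ENNReal.ofReal_le_ofReal hx) hq.le
      _ = ENNReal.ofReal ((C * S x ^ (-β)) ^ q) :=
          ENNReal.ofReal_rpow_of_nonneg (by positivity) hq.le
      _ = ENNReal.ofReal (C ^ q * S x ^ (-(β * q))) := by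
          rw [Real.mul_rpow hC (Real.rpow_nonneg (hSnn x) _)]
          congr 1
          rw [← Real.rpow_mul (hSnn x), neg_mul]
      _ = ENNReal.ofReal (C ^ q) * ENNReal.ofReal (S x ^ (-(β * q))) :=
          ENNReal.ofReal_mul (by positivity)
  apply ne_of_lt
  calc ∫⁻ x, (‖f x‖₊ : ℝ≥0∞) ^ q ∂μ
      ≤ ∫⁻ x, ENNReal.ofReal (C ^ q) * ENNReal.ofReal (S x ^ (-(β * q))) ∂μ :=
        lintegral_mono_ae hptwise
    _ = ENNReal.ofReal (C ^ q) * ∫⁻ x, ENNReal.ofReal (S x ^ (-(β * q))) ∂μ :=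
        lintegral_const_mul' _ _ ENNReal.ofReal_ne_top
    _ < ⊤ := ENNReal.mul_lt_top ENNReal.ofReal_lt_top
        (lint_S_finite θ hθ hR (by positivity) hβσ)

lemma pd_formula {N : ℕ} (θ : Fin N → ℝ) (hθ : ∀ i, 1 < θ i) {γ : ℝ} (hγ : 0 < γ)
    (u : Rn N → ℝ) (c : ℝ)
    (hu : ∀ x : Rn N, u x = (∑ i, |x i| ^ θ i) ^ (-γ) - c)
    {x : Rn N} (hx : ∃ j, x j ≠ 0) (i : Fin N) :
    pd i u x = (-γ * (∑ j, |x j| ^ θ j) ^ (-γ - 1)) * (θ i * |x i| ^ (θ i - 2) * x i) := by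
  set S : Rn N → ℝ := fun x => ∑ j, |x j| ^ θ j with hSdef
  obtain ⟨j0, hj0⟩ := hx
  have hSx : 0 < S x := by
    apply Finset.sum_pos' (fun j _ => Real.rpow_nonneg (abs_nonneg _) _)
    exact ⟨j0, Finset.mem_univ _, Real.rpow_pos_of_pos (abs_pos.2 hj0) _⟩
  have hDS : HasFDerivAt S
      (∑ j, (θ j * |x j| ^ (θ j - 2) * x j) • (EuclideanSpace.proj (𝕜 := ℝ) j)) x := by
    apply HasFDerivAt.fun_sum
    intro j _
    exact (hasDerivAt_abs_rpow (x j) (hθ j)).comp_hasFDerivAt x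
      (EuclideanSpace.proj (𝕜 := ℝ) j).hasFDerivAt
  have hφ : HasDerivAt (fun s : ℝ => s ^ (-γ)) (-γ * S x ^ (-γ - 1)) (S x) := by
    simpa using Real.hasDerivAt_rpow_const (x := S x) (p := -γ) (Or.inl hSx.ne')
  have hU : HasFDerivAt u ((-γ * S x ^ (-γ - 1)) •
      (∑ j, (θ j * |x j| ^ (θ j - 2) * x j) • (EuclideanSpace.proj (𝕜 := ℝ) j))) x := by
    have h1 := hφ.comp_hasFDerivAt x hDS
    have h2 : u = fun y => S y ^ (-γ) - c := funext hu
    rw [h2]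
    exact h1.sub_const c
  rw [pd, hU.fderiv]
  simp only [ContinuousLinearMap.smul_apply, ContinuousLinearMap.sum_apply, smul_eq_mul]
  congr 1
  rw [Finset.sum_eq_single i]
  · simp [PiLp.proj_apply, EuclideanSpace.single_apply]
  · intro b _ hb
    simp [PiLp.proj_apply, EuclideanSpace.single_apply, if_neg hb]
  · intro h
    exact absurd (Finset.mem_univ i) h

lemma pd_bound {N : ℕ} (θ : Fin N → ℝ) (hθ : ∀ i, 1 < θ i) {γ : ℝ} (hγ : 0 < γ)
    (u : Rn N → ℝ) (c : ℝ)
    (hu : ∀ x : Rn N, u x = (∑ i, |x i| ^ θ i) ^ (-γ) - c)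
    {x : Rn N} (hx : ∃ j, x j ≠ 0) (i : Fin N) :
    |pd i u x| ≤ (γ * θ i) * (∑ j, |x j| ^ θ j) ^ (-(γ + 1 / θ i)) := by
  set S : Rn N → ℝ := fun x => ∑ j, |x j| ^ θ j with hSdef
  obtain ⟨j0, hj0⟩ := hx
  have hSx : 0 < S x := by
    apply Finset.sum_pos' (fun j _ => Real.rpow_nonneg (abs_nonneg _) _)
    exact ⟨j0, Finset.mem_univ _, Real.rpow_pos_of_pos (abs_pos.2 hj0) _⟩
  have hθi : 0 < θ i := lt_trans one_pos (hθ i)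
  rw [pd_formula θ hθ hγ u c hu ⟨j0, hj0⟩ i]
  simp only [abs_mul, abs_neg, abs_abs]
  rw [abs_of_pos hγ, abs_of_pos hθi,
    abs_of_pos (Real.rpow_pos_of_pos hSx _), abs_of_nonneg (Real.rpow_nonneg (abs_nonneg _) _)]
  rcases eq_or_ne (x i) 0 with h0 | h0
  · rw [h0, abs_zero, mul_zero, mul_zero]
    positivity
  · -- |x i| ^ (θ i - 2) * |x i| = |x i| ^ (θ i - 1)
    have habs : 0 < |x i| := abs_pos.2 h0
    have hstep : |x i| ^ (θ i - 2) * |x i| = |x i| ^ (θ i - 1) := by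
      nth_rewrite 2 [← Real.rpow_one |x i|]
      rw [← Real.rpow_add habs]
      ring_nf
    have hle : |x i| ^ (θ i - 1) ≤ S x ^ ((θ i - 1) / θ i) := by
      have h1 : |x i| ^ θ i ≤ S x :=
        Finset.single_le_sum (fun j _ => Real.rpow_nonneg (abs_nonneg _) _) (Finset.mem_univ i)
      have h2 : (|x i| ^ θ i) ^ ((θ i - 1) / θ i) ≤ S x ^ ((θ i - 1) / θ i) :=
        Real.rpow_le_rpow (Real.rpow_nonneg (abs_nonneg _) _) h1
          (div_nonneg (by linarith [hθ i]) hθi.le)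
      calc |x i| ^ (θ i - 1) = (|x i| ^ θ i) ^ ((θ i - 1) / θ i) := by
            rw [← Real.rpow_mul (abs_nonneg _)]
            congr 1
            field_simp
        _ ≤ S x ^ ((θ i - 1) / θ i) := h2
    calc γ * S x ^ (-γ - 1) * (θ i * |x i| ^ (θ i - 2) * |x i|)
        = γ * θ i * (S x ^ (-γ - 1) * (|x i| ^ (θ i - 2) * |x i|)) := by ring
      _ = γ * θ i * (S x ^ (-γ - 1) * |x i| ^ (θ i - 1)) := by rw [hstep]
      _ ≤ γ * θ i * (S x ^ (-γ - 1) * S x ^ ((θ i - 1) / θ i)) := by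
          apply mul_le_mul_of_nonneg_left _ (by positivity)
          exact mul_le_mul_of_nonneg_left hle (Real.rpow_nonneg hSx.le _)
      _ = γ * θ i * S x ^ (-(γ + 1 / θ i)) := by
          rw [← Real.rpow_add hSx]
          congr 1
          field_simp
          ring

lemma ae_ne_zero {N : ℕ} (hN : 0 < N) (s : Set (Rn N)) :
    ∀ᵐ x ∂(volume.restrict s), ∃ j, x j ≠ 0 := by
  haveI : Nonempty (Fin N) := ⟨⟨0, hN⟩⟩
  apply ae_restrict_of_ae
  rw [ae_iff]
  have hset : {x : Rn N | ¬∃ j, x j ≠ 0} = {(0 : Rn N)} := by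
    ext x
    simp only [Set.mem_setOf_eq, not_exists, not_not, Set.mem_singleton_iff]
    constructor
    · intro h; ext j; exact h j
    · intro h j; rw [h]; rfl
  rw [hset]
  exact measure_singleton 0

lemma pd_measurable {N : ℕ} (u : Rn N → ℝ) (i : Fin N) : Measurable (pd i u) :=
  measurable_fderiv_apply_const ℝ u (EuclideanSpace.single i 1)

lemma aniso_vol_lt_top {N : ℕ} (θ : Fin N → ℝ) (hθ : ∀ i, 1 < θ i) {R : ℝ} (hR : 0 < R) :
    volume {x : Rn N | ∑ i, |x i| ^ θ i < R} < ⊤ :=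
  lt_of_le_of_lt (aniso_vol_bound θ hθ hR)
    (ENNReal.mul_lt_top ENNReal.ofReal_lt_top (aniso_unit_vol_lt_top θ hθ))

/-- **Example 4.1**: integrability properties of
`u(x) = (∑ |xᵢ|^{θᵢ})^{-γ} - (∑ R^{θᵢ})^{-γ}` on the anisotropic ball. -/
theorem anisotropic_example
    {N : ℕ} (hN : 2 < N)
    (p : Fin N → ℝ) (hp : ∀ i, 1 < p i)
    (pbar : ℝ) (hpbar : 1 / pbar = (1 / (N : ℝ)) * ∑ i, 1 / p i)
    (hpbar1 : 1 < pbar) (hpbarN : pbar < N)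
    (θ : Fin N → ℝ) (hθ : ∀ i, 1 < θ i) (R γ : ℝ) (hR : 0 < R) (hγ : 0 < γ)
    (Ω : Set (Rn N)) (hΩ : Ω = {x : Rn N | ∑ i, |x i| ^ θ i < R})
    (u : Rn N → ℝ)
    (hu : ∀ x : Rn N, u x = (∑ i, |x i| ^ θ i) ^ (-γ) - (∑ i, R ^ θ i) ^ (-γ)) :
    -- (a)
    ((γ < (∑ j, 1 / θ j) * ((N : ℝ) - pbar) / (pbar * N)) →
      MemLp (fun x : Rn N => |∏ i, pd i u x| ^ (1 / (N : ℝ)))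
        (ENNReal.ofReal pbar) (volume.restrict Ω)) ∧
    -- (b)
    (∀ i, γ < ∑ j, 1 / (θ j * p i) - 1 / θ i →
      MemLp (fun x : Rn N => pd i u x) (ENNReal.ofReal (p i)) (volume.restrict Ω)) ∧
    -- (c)
    ((∀ i, γ < ∑ j, 1 / (θ j * p i) - 1 / θ i) →
      (γ < (∑ j, 1 / θ j) * ((N : ℝ) - pbar) / (pbar * N)) ∧
      MemLp u (ENNReal.ofReal ((N : ℝ) * pbar / ((N : ℝ) - pbar)))
        (volume.restrict Ω)) := by
  subst hΩ
  haveI : Nonempty (Fin N) := ⟨⟨0, by omega⟩⟩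
  have hN0 : (0:ℝ) < N := by positivity
  have hNn : 0 < N := by omega
  set σ : ℝ := ∑ j, 1 / θ j with hσdef
  have hσ : 0 < σ := Finset.sum_pos (fun j _ => by
    have := hθ j; positivity) Finset.univ_nonempty
  set S : Rn N → ℝ := fun x => ∑ j, |x j| ^ θ j with hSdef
  have hSnn : ∀ x, 0 ≤ S x := fun x =>
    Finset.sum_nonneg fun i _ => Real.rpow_nonneg (abs_nonneg _) _
  have hSpos : ∀ x : Rn N, (∃ j, x j ≠ 0) → 0 < S x := by
    rintro x ⟨j0, hj0⟩
    apply Finset.sum_pos' (fun j _ => Real.rpow_nonneg (abs_nonneg _) _)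
    exact ⟨j0, Finset.mem_univ _, Real.rpow_pos_of_pos (abs_pos.2 hj0) _⟩
  have hpbar0 : 0 < pbar := by linarith
  -- rewriting the (b) condition
  have hcond_b : ∀ i, (∑ j, 1 / (θ j * p i)) = σ / p i := by
    intro i
    rw [hσdef, Finset.sum_div]
    exact Finset.sum_congr rfl fun j _ => (div_div 1 (θ j) (p i)).symm
  -- part (a)
  have parta : (γ < σ * ((N : ℝ) - pbar) / (pbar * N)) →
      MemLp (fun x : Rn N => |∏ i, pd i u x| ^ (1 / (N : ℝ)))
        (ENNReal.ofReal pbar) (volume.restrict {x : Rn N | ∑ i, |x i| ^ θ i < R}) := by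
    intro hcond
    have h1 : γ * (pbar * N) < σ * ((N:ℝ) - pbar) :=
      (lt_div_iff₀ (by positivity)).1 hcond
    have hβσ : (γ + σ / N) * pbar < σ := by
      have hkey : (γ + σ / N) * pbar * N = γ * (pbar * N) + σ * pbar := by
        field_simp
      have h2 : (γ + σ / N) * pbar * N < σ * N := by nlinarith
      exact lt_of_mul_lt_mul_right (by nlinarith) hN0.le
    apply memLp_aux θ hθ hR (C := (∏ i, γ * θ i) ^ (1 / (N:ℝ)))
      (β := γ + σ / N) (q := pbar)
    · apply Measurable.aestronglyMeasurable
      exact ((Finset.univ.measurable_prod fun i _ => pd_measurable u i).abs).pow_const _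
    · exact Real.rpow_nonneg (Finset.prod_nonneg fun i _ => by
        have := hθ i; positivity) _
    · linarith
    · positivity
    · exact hβσ
    · filter_upwards [ae_ne_zero hNn _] with x hx
      have hSx : 0 < S x := hSpos x hx
      have step1 : |∏ i, pd i u x| ≤ ∏ i, ((γ * θ i) * S x ^ (-(γ + 1 / θ i))) := by
        rw [Finset.abs_prod]
        exact Finset.prod_le_prod (fun i _ => abs_nonneg _)
          (fun i _ => pd_bound θ hθ hγ u _ hu hx i)
      have step2 : ∏ i, ((γ * θ i) * S x ^ (-(γ + 1 / θ i)))
          = (∏ i, γ * θ i) * S x ^ (-((N:ℝ) * γ + σ)) := by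
        rw [Finset.prod_mul_distrib, ← Real.rpow_sum_of_pos hSx]
        congr 1
        rw [hσdef]
        rw [Finset.sum_neg_distrib]
        congr 1
        rw [neg_inj, Finset.sum_add_distrib, Finset.sum_const, Finset.card_univ,
          Fintype.card_fin, nsmul_eq_mul]
      have step3 : |∏ i, pd i u x| ≤ (∏ i, γ * θ i) * S x ^ (-((N:ℝ) * γ + σ)) :=
        step1.trans_eq step2
      rw [abs_of_nonneg (Real.rpow_nonneg (abs_nonneg _) _)]
      calc |∏ i, pd i u x| ^ (1 / (N:ℝ))
          ≤ ((∏ i, γ * θ i) * S x ^ (-((N:ℝ) * γ + σ))) ^ (1 / (N:ℝ)) :=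
            Real.rpow_le_rpow (abs_nonneg _) step3 (by positivity)
        _ = (∏ i, γ * θ i) ^ (1 / (N:ℝ)) * S x ^ (-(γ + σ / N)) := by
            rw [Real.mul_rpow (Finset.prod_nonneg fun i _ => by
                have := hθ i; positivity) (Real.rpow_nonneg hSx.le _),
              ← Real.rpow_mul hSx.le]
            congr 2
            field_simp
  refine ⟨parta, ?_, ?_⟩
  · -- part (b)
    intro i hi
    rw [hcond_b i] at hi
    have hpi : 0 < p i := lt_trans one_pos (hp i)
    apply memLp_aux θ hθ hR (C := γ * θ i) (β := γ + 1 / θ i) (q := p i)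
    · exact (pd_measurable u i).aestronglyMeasurable
    · have := hθ i; positivity
    · exact hpi
    · have := hθ i; positivity
    · have : γ + 1 / θ i < σ / p i := by linarith
      calc (γ + 1 / θ i) * p i < (σ / p i) * p i := by
            exact mul_lt_mul_of_pos_right this hpi
        _ = σ := by field_simp
    · filter_upwards [ae_ne_zero hNn _] with x hx
      exact pd_bound θ hθ hγ u _ hu hx i
  · -- part (c)
    intro hall
    have hall' : ∀ i, γ < σ / p i - 1 / θ i := fun i => by
      have := hall i; rwa [hcond_b i] at this
    have hsum : (N:ℝ) * γ < σ * ((N:ℝ) * (1 / pbar)) - σ := by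
      have h := Finset.sum_lt_sum_of_nonempty Finset.univ_nonempty
        (fun i _ => hall' i)
      rw [Finset.sum_const, Finset.card_univ, Fintype.card_fin, nsmul_eq_mul] at h
      rw [Finset.sum_sub_distrib] at h
      have e1 : ∑ i, σ / p i = σ * ∑ i, 1 / p i := by
        rw [Finset.mul_sum]
        exact Finset.sum_congr rfl fun i _ => by rw [div_eq_mul_one_div]
      have e2 : (∑ i : Fin N, 1 / p i) = (N:ℝ) * (1 / pbar) := by
        rw [hpbar]; field_simp
      rw [e1, e2] at h
      exact h
    have hfirst : γ < σ * ((N : ℝ) - pbar) / (pbar * N) := by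
      rw [lt_div_iff₀ (by positivity)]
      have hkey : σ * ((N:ℝ) * (1/pbar)) * pbar = σ * N := by field_simp
      nlinarith [mul_lt_mul_of_pos_right hsum hpbar0]
    refine ⟨hfirst, ?_⟩
    have hNp : 0 < (N:ℝ) - pbar := by linarith
    have hq : 0 < (N:ℝ) * pbar / ((N:ℝ) - pbar) := by positivity
    have hudec : u = (fun x => S x ^ (-γ)) - (fun _ => (∑ i, R ^ θ i) ^ (-γ)) :=
      funext fun x => hu x
    rw [hudec]
    haveI : IsFiniteMeasure (volume.restrict {x : Rn N | ∑ i, |x i| ^ θ i < R}) := by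
      constructor
      rw [Measure.restrict_apply_univ]
      exact aniso_vol_lt_top θ hθ hR
    apply MemLp.sub
    · apply memLp_aux θ hθ hR (C := 1) (β := γ) (q := (N:ℝ) * pbar / ((N:ℝ) - pbar))
      · exact ((aniso_S_continuous θ hθ).measurable.pow_const _).aestronglyMeasurable
      · norm_num
      · exact hq
      · exact hγ
      · have h1 : γ * ((N:ℝ) * pbar) < σ * ((N:ℝ) - pbar) := by
          have := (lt_div_iff₀ (by positivity : (0:ℝ) < pbar * N)).1 hfirst
          nlinarith
        calc γ * ((N:ℝ) * pbar / ((N:ℝ) - pbar)) = γ * ((N:ℝ) * pbar) / ((N:ℝ) - pbar) := by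
              ring
          _ < σ := by rw [div_lt_iff₀ hNp]; nlinarith
      · apply Eventually.of_forall
        intro x
        rw [abs_of_nonneg (Real.rpow_nonneg (hSnn x) _), one_mul]
    · exact memLp_const _

end
end
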